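/- Let V̂ : [0,∞) × ℝ → ℝ with V̂ ≤ M̂ for a function M̂ : [0,∞) → ℝ, let b₀, b₁ : ℝ → [0,∞] be defined by b₀(x) = sup{φ ∈ [0, b/a) : V̂(φ,x) = M̂(φ)} and b₁(x) = inf{φ ∈ (b/a, ∞] : V̂(φ,x) = M̂(φ)} (with conventions sup ∅ = 0, inf ∅ = ∞). If for every φ the map x ↦ V̂(φ,x) is increasing, and the sets {φ < b/a : V̂(φ,x)=M̂(φ)} and {φ > b/a : V̂(φ,x)=M̂(φ)} are downward respectively upward closed in φ for each x, then x ↦ b₀(x) is increasing and x ↦ b₁(x) is decreasing. -/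
import Mathlib


open scoped ENNReal

/-- monotonicity of the optimal stopping boundaries
`b₀(x) = sup{φ ∈ [0,b/a) : V(φ,x) = M(φ)}` (with `sup ∅ = 0`) and
`b₁(x) = inf{φ ∈ (b/a,∞] : V(φ,x) = M(φ)}` (with `inf ∅ = ∞`),
given that `x ↦ V(φ,x)` is increasing and the stopping sets are
downward/upward closed in `φ` below/above `b/a`. -/
theorem stmt1 (V : ℝ → ℝ → ℝ) (M : ℝ → ℝ) (a b : ℝ) (ha : 0 < a) (hb : 0 < b)
    (hle : ∀ φ x, 0 ≤ φ → V φ x ≤ M φ)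
    (b0 b1 : ℝ → ℝ≥0∞)
    (hb0 : ∀ x, b0 x =
      sSup {φ : ℝ≥0∞ | φ < ENNReal.ofReal (b / a) ∧ V φ.toReal x = M φ.toReal})
    (hb1 : ∀ x, b1 x =
      sInf {φ : ℝ≥0∞ | ENNReal.ofReal (b / a) < φ ∧ φ ≠ ⊤ ∧ V φ.toReal x = M φ.toReal})
    (hmono : ∀ φ, 0 ≤ φ → Monotone (fun x => V φ x))
    (hdown : ∀ x φ ψ, 0 ≤ ψ → ψ ≤ φ → φ < b / a → V φ x = M φ → V ψ x = M ψ)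
    (hup : ∀ x φ ψ, b / a < φ → φ ≤ ψ → V φ x = M φ → V ψ x = M ψ) :
    Monotone b0 ∧ Antitone b1 := by
  have key : ∀ (x y : ℝ) (φ : ℝ≥0∞), x ≤ y → V φ.toReal x = M φ.toReal → V φ.toReal y = M φ.toReal := by
    intro x y φ hxy h
    exact le_antisymm (hle _ _ ENNReal.toReal_nonneg)
      (h ▸ hmono φ.toReal ENNReal.toReal_nonneg hxy)
  constructor
  · intro x y hxy
    rw [hb0 x, hb0 y]
    exact sSup_le_sSup fun φ ⟨h1, h2⟩ => ⟨h1, key x y φ hxy h2⟩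
  · intro x y hxy
    rw [hb1 x, hb1 y]
    exact sInf_le_sInf fun φ ⟨h1, h2, h3⟩ => ⟨h1, h2, key x y φ hxy h3⟩
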